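/- Let $\alpha < \beta$ be real numbers, $\nu > 0$, and $\varphi, \bar u$ be measurable functions on a measure space $Q$ with $\alpha \le \bar u \le \beta$ a.e. Suppose $\int_Q (\varphi + \nu \bar u)(u - \bar u) \ge 0$ for all measurable $u$ with $\alpha \le u \le \beta$ a.e. (and $\varphi + \nu\bar u$ integrable against such differences). Then $\bar u(x) = \min\{\beta, \max\{\alpha, -\varphi(x)/\nu\}\}$ for a.e. $x \in Q$. -/

import Mathlib

open MeasureTheory

lemma memL2_mul {X : Type*} [MeasurableSpace X] {μ : Measure X} {f g : X → ℝ}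
    (hf : MemLp f 2 μ) (hg : MemLp g 2 μ) : Integrable (fun x => f x * g x) μ := by
  rw [← memLp_one_iff_integrable]
  exact hg.smul hf (hpqr := ⟨by norm_num [ENNReal.inv_two_add_inv_two]⟩)

lemma clamp_key (α β t v : ℝ) (hαβ : α ≤ β) (hv1 : α ≤ v) (hv2 : v ≤ β) :
    0 ≤ (min β (max α t) - t) * (v - min β (max α t)) := by
  rcases le_total t α with h | h
  · rw [max_eq_left h, min_eq_right hαβ]
    exact mul_nonneg (by linarith) (by linarith)
  · rw [max_eq_right h]
    rcases le_total β t with h2 | h2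
    · rw [min_eq_left h2]
      nlinarith [hv2, h2]
    · rw [min_eq_right h2]; simp

/-- Pointwise projection formula: if `ū ∈ [α, β]` a.e. satisfies the variational
inequality `∫ (φ + ν ū)(u - ū) ≥ 0` for all admissible `u`, then
`ū(x) = proj_{[α,β]}(-φ(x)/ν)` a.e. -/
theorem stmt3 {X : Type*} [MeasurableSpace X] (μ : Measure X) [IsFiniteMeasure μ]
    (α β : ℝ) (hαβ : α < β) (ν : ℝ) (hν : 0 < ν)
    (φ ubar : X → ℝ) (hφ : MemLp φ 2 μ) (hubar : MemLp ubar 2 μ)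
    (hubar_mem : ∀ᵐ x ∂μ, α ≤ ubar x ∧ ubar x ≤ β)
    (hVI : ∀ u : X → ℝ, Measurable u → MemLp u 2 μ →
      (∀ᵐ x ∂μ, α ≤ u x ∧ u x ≤ β) →
      0 ≤ ∫ x, (φ x + ν * ubar x) * (u x - ubar x) ∂μ) :
    ∀ᵐ x ∂μ, ubar x = min β (max α (-(φ x) / ν)) := by
  set φ' : X → ℝ := hφ.1.mk φ with hφ'def
  have hφ'meas : Measurable φ' := hφ.1.stronglyMeasurable_mk.measurable
  have hφeq : φ =ᵐ[μ] φ' := hφ.1.ae_eq_mk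
  set p : X → ℝ := fun x => min β (max α (-(φ' x) / ν)) with hpdef
  have hpmeas : Measurable p := by
    apply Measurable.min measurable_const
    exact Measurable.max measurable_const ((hφ'meas.neg).div_const ν)
  have hpbnd : ∀ x, α ≤ p x ∧ p x ≤ β := fun x =>
    ⟨le_min hαβ.le (le_max_left _ _), min_le_left _ _⟩
  have hpmem : MemLp p 2 μ := by
    refine MemLp.of_bound hpmeas.aestronglyMeasurable (max |α| |β|) ?_
    filter_upwards with x
    rw [Real.norm_eq_abs, abs_le]
    constructor
    · have := (hpbnd x).1
      have : -|α| ≤ α := neg_abs_le α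
      have := (hpbnd x).1
      refine le_trans (neg_le_neg (le_max_left |α| |β|)) ?_
      linarith [neg_abs_le α, (hpbnd x).1]
    · exact le_trans (hpbnd x).2 (le_trans (le_abs_self β) (le_max_right _ _))
  have hVIp := hVI p hpmeas hpmem (Filter.Eventually.of_forall hpbnd)
  -- pointwise: (φ + ν ubar)(p - ubar) ≤ -ν (p - ubar)^2  a.e.
  have hptwise : ∀ᵐ x ∂μ,
      (φ x + ν * ubar x) * (p x - ubar x) ≤ -(ν * ((p x - ubar x) * (p x - ubar x))) := by
    filter_upwards [hubar_mem, hφeq] with x ⟨h1, h2⟩ heq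
    have key := clamp_key α β (-(φ' x) / ν) (ubar x) hαβ.le h1 h2
    have hφx : φ x = φ' x := heq
    have hpx : p x = min β (max α (-(φ' x) / ν)) := rfl
    have hν' : ν ≠ 0 := hν.ne'
    have key' : 0 ≤ (p x - (-(φ' x) / ν)) * (ubar x - p x) := key
    have e : ν * (p x - (-(φ' x) / ν)) = ν * p x + φ' x := by field_simp; ring
    have key2 : 0 ≤ (ν * p x + φ' x) * (ubar x - p x) := by
      have h := mul_nonneg hν.le key'
      rw [← mul_assoc, e] at h
      exact h
    rw [hφx]
    nlinarith [key2]
  -- integrability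
  have hint1 : Integrable (fun x => (φ x + ν * ubar x) * (p x - ubar x)) μ := by
    have h1 : MemLp (fun x => φ x + ν * ubar x) 2 μ := hφ.add (hubar.const_mul ν)
    have h2 : MemLp (fun x => p x - ubar x) 2 μ := hpmem.sub hubar
    exact memL2_mul h1 h2
  have hint2 : Integrable (fun x => ν * ((p x - ubar x) * (p x - ubar x))) μ := by
    have h2 : MemLp (fun x => p x - ubar x) 2 μ := hpmem.sub hubar
    exact (memL2_mul h2 h2).const_mul ν
  have hle : ∫ x, (φ x + ν * ubar x) * (p x - ubar x) ∂μ
      ≤ ∫ x, -(ν * ((p x - ubar x) * (p x - ubar x))) ∂μ :=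
    integral_mono_ae hint1 hint2.neg hptwise
  rw [integral_neg] at hle
  have hq0 : ∫ x, ν * ((p x - ubar x) * (p x - ubar x)) ∂μ = 0 := by
    have hnn : 0 ≤ ∫ x, ν * ((p x - ubar x) * (p x - ubar x)) ∂μ :=
      integral_nonneg fun x => mul_nonneg hν.le (mul_self_nonneg _)
    linarith
  have hae : (fun x => ν * ((p x - ubar x) * (p x - ubar x))) =ᵐ[μ] 0 := by
    rw [← integral_eq_zero_iff_of_nonneg
      (fun x => mul_nonneg hν.le (mul_self_nonneg _)) hint2]
    exact hq0
  filter_upwards [hae, hφeq] with x hx heq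
  have : ν * ((p x - ubar x) * (p x - ubar x)) = 0 := hx
  have h1 : (p x - ubar x) * (p x - ubar x) = 0 := by
    rcases mul_eq_zero.mp this with h | h
    · exact absurd h hν.ne'
    · exact h
  have h2 : p x = ubar x := by nlinarith [mul_self_nonneg (p x - ubar x)]
  rw [← h2, hpdef]
  simp only [heq]
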